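/- Let H ⊆ G be algebra groups over F_q. Then Ind_H^G(χ) is a superclass function of G for every superclass function χ of H if and only if SInd_H^G(χ) = Ind_H^G(χ) for every superclass function χ of H. -/

import Mathlib

/-!
STATEMENT 3: Let H ⊆ G be algebra groups over F_q.  Then Ind_H^G(χ) is a superclass
function of G for every superclass function χ of H if and only if
SInd_H^G(χ) = Ind_H^G(χ) for every superclass function χ of H.
-/
open scoped Classical

noncomputable section

def setFinset {α : Type*} [Fintype α] (S : Set α) : Finset α :=
  Finset.univ.filter (· ∈ S)

/-- The algebra group `1 + J` attached to a nilpotent algebra `J`. -/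
def algebraGroup {A : Type*} [Ring A] (J : Set A) : Set A :=
  (fun a => 1 + a) '' J

/-- `χ` is constant on the superclasses of `G`: `u ~ v` iff `v − 1 ∈ G(u−1)G`. -/
def IsSuperclassFn {A : Type*} [Ring A] (G : Set A) (χ : A → ℂ) : Prop :=
  ∀ u ∈ G, ∀ v ∈ G, (∃ x ∈ G, ∃ y ∈ G, v - 1 = x * (u - 1) * y) → χ u = χ v

/-- Superinduction `SInd_H^G(χ)(g) = (1/(|G||H|)) Σ_{x,y∈G} χ̇(x(g−1)y + 1)`. -/
def SInd {A : Type*} [Ring A] [Fintype A] (G H : Set A) (χ : A → ℂ) (g : A) : ℂ :=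
  (((setFinset G).card : ℂ) * ((setFinset H).card : ℂ))⁻¹ *
    ∑ x ∈ setFinset G, ∑ y ∈ setFinset G,
      if x * (g - 1) * y + 1 ∈ H then χ (x * (g - 1) * y + 1) else 0

/-- Induction `Ind_H^G(χ)(g) = (1/|H|) Σ_{y∈G} χ̇(y⁻¹ g y)`. -/
def Ind {A : Type*} [Ring A] [Fintype A] (G H : Set A) (χ : A → ℂ) (g : A) : ℂ :=
  ((setFinset H).card : ℂ)⁻¹ *
    ∑ y ∈ setFinset G,
      if Ring.inverse y * g * y ∈ H then χ (Ring.inverse y * g * y) else 0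

section Helpers

lemma mem_setFinset {α : Type*} [Fintype α] {S : Set α} {x : α} :
    x ∈ setFinset S ↔ x ∈ S := by simp [setFinset]

lemma mem_algebraGroup' {A : Type*} [Ring A] {S : Set A} {x : A} :
    x ∈ algebraGroup S ↔ x - 1 ∈ S := by
  constructor
  · rintro ⟨a, ha, rfl⟩; simpa using ha
  · intro h; exact ⟨x - 1, h, by noncomm_ring⟩

lemma sum_comm3 {α β : Type*} [AddCommMonoid β] {s : Finset α} (F : α → α → α → β) :
    (∑ x ∈ s, ∑ y ∈ s, ∑ z ∈ s, F x y z) = ∑ z ∈ s, ∑ x ∈ s, ∑ y ∈ s, F x y z := by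
  calc (∑ x ∈ s, ∑ y ∈ s, ∑ z ∈ s, F x y z)
      = ∑ x ∈ s, ∑ z ∈ s, ∑ y ∈ s, F x y z :=
        Finset.sum_congr rfl fun x _ => Finset.sum_comm
    _ = ∑ z ∈ s, ∑ x ∈ s, ∑ y ∈ s, F x y z := Finset.sum_comm

variable {F : Type*} [Field F] {A : Type*} [Ring A] [Algebra F A]
variable {J : NonUnitalSubalgebra F A}

lemma pow_succ_mem_nus {a : A} (ha : a ∈ J) : ∀ i : ℕ, a ^ (i + 1) ∈ J
  | 0 => by simpa
  | (i + 1) => by rw [pow_succ]; exact mul_mem (pow_succ_mem_nus ha i) ha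

lemma one_mem_algebraGroup : (1 : A) ∈ algebraGroup (J : Set A) := by
  rw [mem_algebraGroup']; simpa using (zero_mem J)

lemma mul_mem_algebraGroup {u v : A} (hu : u ∈ algebraGroup (J : Set A))
    (hv : v ∈ algebraGroup (J : Set A)) : u * v ∈ algebraGroup (J : Set A) := by
  rw [mem_algebraGroup'] at *
  have h : u * v - 1 = (u - 1) * (v - 1) + (u - 1) + (v - 1) := by noncomm_ring
  rw [h]
  exact add_mem (add_mem (mul_mem hu hv) hu) hv

lemma inverse_spec
    (hnil : ∃ k : ℕ, ∀ l : List A, (∀ x ∈ l, x ∈ J) → k ≤ l.length → l.prod = 0)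
    {u : A} (hu : u ∈ algebraGroup (J : Set A)) :
    Ring.inverse u ∈ algebraGroup (J : Set A) ∧
      u * Ring.inverse u = 1 ∧ Ring.inverse u * u = 1 := by
  obtain ⟨k, hk⟩ := hnil
  rw [mem_algebraGroup'] at hu
  set a : A := u - 1 with ha
  have hpow : a ^ (k + 1) = 0 := by
    have := hk (List.replicate (k + 1) a)
      (fun x hx => by rw [List.eq_of_mem_replicate hx]; exact hu) (by simp)
    simpa [List.prod_replicate] using this
  have hpow' : (-a) ^ (k + 1) = 0 := by
    rw [neg_pow, hpow, mul_zero]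
  set b : A := ∑ i ∈ Finset.range (k + 1), (-a) ^ i with hb
  have h2 : -a - 1 = -u := by rw [ha]; abel
  have hbu : b * u = 1 := by
    have h1 := geom_sum_mul (-a) (k + 1)
    rw [hpow', zero_sub, h2, mul_neg, neg_inj] at h1
    exact h1
  have hub : u * b = 1 := by
    have h1 := mul_geom_sum (-a) (k + 1)
    rw [hpow', zero_sub, h2, neg_mul, neg_inj] at h1
    exact h1
  have hinv : Ring.inverse u = b := by
    have : Ring.inverse ((⟨u, b, hub, hbu⟩ : Aˣ) : A) = b := by
      rw [Ring.inverse_unit]; rfl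
    simpa using this
  have hbG : b ∈ algebraGroup (J : Set A) := by
    rw [mem_algebraGroup']
    have h3 : b = (∑ i ∈ Finset.range k, (-a) ^ (i + 1)) + 1 := by
      rw [hb, Finset.sum_range_succ' (fun i => (-a) ^ i) k, pow_zero]
    have h4 : b - 1 = ∑ i ∈ Finset.range k, (-a) ^ (i + 1) := by
      rw [h3]; exact add_sub_cancel_right _ _
    rw [h4]
    exact sum_mem (fun i _ => pow_succ_mem_nus (neg_mem hu) i)
  rw [hinv]
  exact ⟨hbG, hub, hbu⟩

lemma sum_mul_right [Fintype A]
    (hnil : ∃ k : ℕ, ∀ l : List A, (∀ x ∈ l, x ∈ J) → k ≤ l.length → l.prod = 0)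
    {a : A} (ha : a ∈ algebraGroup (J : Set A)) (f : A → ℂ) :
    ∑ x ∈ setFinset (algebraGroup (J : Set A)), f (x * a)
      = ∑ x ∈ setFinset (algebraGroup (J : Set A)), f x := by
  obtain ⟨hainv, hua, hau⟩ := inverse_spec hnil ha
  refine Finset.sum_nbij' (fun x => x * a) (fun x => x * Ring.inverse a)
    ?_ ?_ ?_ ?_ (fun x _ => rfl)
  · intro x hx
    rw [mem_setFinset] at *
    exact mul_mem_algebraGroup hx ha
  · intro x hx
    rw [mem_setFinset] at *
    exact mul_mem_algebraGroup hx hainv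
  · intro x _
    show x * a * Ring.inverse a = x
    rw [mul_assoc, hua, mul_one]
  · intro x _
    show x * Ring.inverse a * a = x
    rw [mul_assoc, hau, mul_one]

lemma sum_mul_left [Fintype A]
    (hnil : ∃ k : ℕ, ∀ l : List A, (∀ x ∈ l, x ∈ J) → k ≤ l.length → l.prod = 0)
    {a : A} (ha : a ∈ algebraGroup (J : Set A)) (f : A → ℂ) :
    ∑ x ∈ setFinset (algebraGroup (J : Set A)), f (a * x)
      = ∑ x ∈ setFinset (algebraGroup (J : Set A)), f x := by
  obtain ⟨hainv, hua, hau⟩ := inverse_spec hnil ha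
  refine Finset.sum_nbij' (fun x => a * x) (fun x => Ring.inverse a * x)
    ?_ ?_ ?_ ?_ (fun x _ => rfl)
  · intro x hx
    rw [mem_setFinset] at *
    exact mul_mem_algebraGroup ha hx
  · intro x hx
    rw [mem_setFinset] at *
    exact mul_mem_algebraGroup hainv hx
  · intro x _
    show Ring.inverse a * (a * x) = x
    rw [← mul_assoc, hau, one_mul]
  · intro x _
    show a * (Ring.inverse a * x) = x
    rw [← mul_assoc, hua, one_mul]

/-- `SInd` of anything is always a superclass function of `G`. -/
lemma sind_superclassFn [Fintype A]
    (hnil : ∃ k : ℕ, ∀ l : List A, (∀ x ∈ l, x ∈ J) → k ≤ l.length → l.prod = 0)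
    (H : Set A) (χ : A → ℂ) :
    IsSuperclassFn (algebraGroup (J : Set A)) (SInd (algebraGroup (J : Set A)) H χ) := by
  rintro u hu v hv ⟨x, hx, y, hy, hvu⟩
  unfold SInd
  congr 1
  rw [hvu]
  calc ∑ p ∈ setFinset (algebraGroup (J : Set A)), ∑ q ∈ setFinset (algebraGroup (J : Set A)),
        (if p * (u - 1) * q + 1 ∈ H then χ (p * (u - 1) * q + 1) else 0)
      = ∑ p ∈ setFinset (algebraGroup (J : Set A)), ∑ q ∈ setFinset (algebraGroup (J : Set A)),
        (if p * (u - 1) * (y * q) + 1 ∈ H then χ (p * (u - 1) * (y * q) + 1) else 0) :=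
        Finset.sum_congr rfl fun p _ =>
          (sum_mul_left hnil hy
            (fun q => if p * (u - 1) * q + 1 ∈ H then χ (p * (u - 1) * q + 1) else 0)).symm
    _ = ∑ p ∈ setFinset (algebraGroup (J : Set A)), ∑ q ∈ setFinset (algebraGroup (J : Set A)),
        (if p * x * (u - 1) * (y * q) + 1 ∈ H then χ (p * x * (u - 1) * (y * q) + 1) else 0) :=
        (sum_mul_right hnil hx
          (fun p => ∑ q ∈ setFinset (algebraGroup (J : Set A)),
            if p * (u - 1) * (y * q) + 1 ∈ H then χ (p * (u - 1) * (y * q) + 1) else 0)).symm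
    _ = ∑ p ∈ setFinset (algebraGroup (J : Set A)), ∑ q ∈ setFinset (algebraGroup (J : Set A)),
        (if p * (x * (u - 1) * y) * q + 1 ∈ H
          then χ (p * (x * (u - 1) * y) * q + 1) else 0) := by
        refine Finset.sum_congr rfl fun p _ => Finset.sum_congr rfl fun q _ => ?_
        have key : p * x * (u - 1) * (y * q) + 1 = p * (x * (u - 1) * y) * q + 1 := by
          noncomm_ring
        rw [key]

/-- Key identity: the sum of `Ind` over the superclass hull equals `|G|² · SInd`. -/
lemma sum_ind_eq [Fintype A]
    (hnil : ∃ k : ℕ, ∀ l : List A, (∀ x ∈ l, x ∈ J) → k ≤ l.length → l.prod = 0)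
    (H : Set A) (χ : A → ℂ) (g : A)
    (hn : ((setFinset (algebraGroup (J : Set A))).card : ℂ) ≠ 0)
    (hh : ((setFinset H).card : ℂ) ≠ 0) :
    (∑ x ∈ setFinset (algebraGroup (J : Set A)), ∑ y ∈ setFinset (algebraGroup (J : Set A)),
        Ind (algebraGroup (J : Set A)) H χ (x * (g - 1) * y + 1))
      = ((setFinset (algebraGroup (J : Set A))).card : ℂ) ^ 2 *
          SInd (algebraGroup (J : Set A)) H χ g := by
  set s := setFinset (algebraGroup (J : Set A)) with hs
  have step1 : ∀ z ∈ s, ∀ x y : A,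
      Ring.inverse z * (x * (g - 1) * y + 1) * z
        = (Ring.inverse z * x) * (g - 1) * (y * z) + 1 := by
    intro z hz x y
    rw [hs, mem_setFinset] at hz
    obtain ⟨_, _, hzu⟩ := inverse_spec hnil hz
    calc Ring.inverse z * (x * (g - 1) * y + 1) * z
        = (Ring.inverse z * x) * (g - 1) * (y * z) + Ring.inverse z * z := by noncomm_ring
      _ = (Ring.inverse z * x) * (g - 1) * (y * z) + 1 := by rw [hzu]
  have expand : (∑ x ∈ s, ∑ y ∈ s, Ind (algebraGroup (J : Set A)) H χ (x * (g - 1) * y + 1))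
      = ((setFinset H).card : ℂ)⁻¹ *
        ∑ z ∈ s, ∑ x ∈ s, ∑ y ∈ s,
          (if (Ring.inverse z * x) * (g - 1) * (y * z) + 1 ∈ H
            then χ ((Ring.inverse z * x) * (g - 1) * (y * z) + 1) else 0) := by
    have e1 : (∑ x ∈ s, ∑ y ∈ s, Ind (algebraGroup (J : Set A)) H χ (x * (g - 1) * y + 1))
        = ((setFinset H).card : ℂ)⁻¹ *
          ∑ x ∈ s, ∑ y ∈ s, ∑ z ∈ s,
            (if (Ring.inverse z * x) * (g - 1) * (y * z) + 1 ∈ H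
              then χ ((Ring.inverse z * x) * (g - 1) * (y * z) + 1) else 0) := by
      unfold Ind
      simp only [← Finset.mul_sum]
      congr 1
      refine Finset.sum_congr rfl fun x _ => Finset.sum_congr rfl fun y _ =>
        Finset.sum_congr rfl fun z hz => ?_
      rw [step1 z hz x y]
    rw [e1]
    congr 1
    exact sum_comm3 _
  have inner : ∀ z ∈ s,
      (∑ x ∈ s, ∑ y ∈ s,
        (if (Ring.inverse z * x) * (g - 1) * (y * z) + 1 ∈ H
          then χ ((Ring.inverse z * x) * (g - 1) * (y * z) + 1) else 0))
      = ∑ x ∈ s, ∑ y ∈ s,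
        (if x * (g - 1) * y + 1 ∈ H then χ (x * (g - 1) * y + 1) else 0) := by
    intro z hz
    rw [hs, mem_setFinset] at hz
    obtain ⟨hzinv, _, _⟩ := inverse_spec hnil hz
    calc (∑ x ∈ s, ∑ y ∈ s,
          (if (Ring.inverse z * x) * (g - 1) * (y * z) + 1 ∈ H
            then χ ((Ring.inverse z * x) * (g - 1) * (y * z) + 1) else 0))
        = ∑ x ∈ s, ∑ y ∈ s,
          (if (Ring.inverse z * x) * (g - 1) * y + 1 ∈ H
            then χ ((Ring.inverse z * x) * (g - 1) * y + 1) else 0) :=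
          Finset.sum_congr rfl fun x _ =>
            sum_mul_right hnil hz
              (fun y => if (Ring.inverse z * x) * (g - 1) * y + 1 ∈ H
                then χ ((Ring.inverse z * x) * (g - 1) * y + 1) else 0)
      _ = ∑ x ∈ s, ∑ y ∈ s,
          (if x * (g - 1) * y + 1 ∈ H then χ (x * (g - 1) * y + 1) else 0) :=
          sum_mul_left hnil hzinv
            (fun x => ∑ y ∈ s,
              if x * (g - 1) * y + 1 ∈ H then χ (x * (g - 1) * y + 1) else 0)
  rw [expand, Finset.sum_congr rfl inner, Finset.sum_const, nsmul_eq_mul]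
  unfold SInd
  rw [← hs]
  rw [mul_inv]
  field_simp

end Helpers

theorem ind_superclass_iff_sind_eq_ind
    (F : Type*) [Field F] [Fintype F]
    (A : Type*) [Ring A] [Algebra F A] [Fintype A]
    (J J' : NonUnitalSubalgebra F A)
    (hnil : ∃ k : ℕ, ∀ l : List A, (∀ x ∈ l, x ∈ J) → k ≤ l.length → l.prod = 0)
    (hsub : (J' : Set A) ⊆ (J : Set A)) :
    (∀ χ : A → ℂ, IsSuperclassFn (algebraGroup (J' : Set A)) χ →
        IsSuperclassFn (algebraGroup (J : Set A))
          (Ind (algebraGroup (J : Set A)) (algebraGroup (J' : Set A)) χ)) ↔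
    (∀ χ : A → ℂ, IsSuperclassFn (algebraGroup (J' : Set A)) χ →
        ∀ g ∈ algebraGroup (J : Set A),
          SInd (algebraGroup (J : Set A)) (algebraGroup (J' : Set A)) χ g =
            Ind (algebraGroup (J : Set A)) (algebraGroup (J' : Set A)) χ g) := by
  have hn : ((setFinset (algebraGroup (J : Set A))).card : ℂ) ≠ 0 := by
    have h1 : (setFinset (algebraGroup (J : Set A))).Nonempty :=
      ⟨1, mem_setFinset.2 one_mem_algebraGroup⟩
    exact Nat.cast_ne_zero.mpr (Finset.card_pos.mpr h1).ne'
  have hh : ((setFinset (algebraGroup (J' : Set A))).card : ℂ) ≠ 0 := by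
    have h1 : (setFinset (algebraGroup (J' : Set A))).Nonempty :=
      ⟨1, mem_setFinset.2 one_mem_algebraGroup⟩
    exact Nat.cast_ne_zero.mpr (Finset.card_pos.mpr h1).ne'
  constructor
  · -- Ind superclass fn ⇒ SInd = Ind
    intro hInd χ hχ g hg
    have hmemw : ∀ x ∈ setFinset (algebraGroup (J : Set A)),
        ∀ y ∈ setFinset (algebraGroup (J : Set A)),
        x * (g - 1) * y + 1 ∈ algebraGroup (J : Set A) := by
      intro x hx y hy
      rw [mem_setFinset] at hx hy
      rw [mem_algebraGroup'] at hx hy hg ⊢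
      have h : x * (g - 1) * y + 1 - 1
          = ((x - 1) * (g - 1) + (g - 1)) * (y - 1) + ((x - 1) * (g - 1) + (g - 1)) := by
        noncomm_ring
      rw [h]
      exact add_mem (mul_mem (add_mem (mul_mem hx hg) hg) hy)
        (add_mem (mul_mem hx hg) hg)
    have key := sum_ind_eq hnil (algebraGroup (J' : Set A)) χ g hn hh
    have const : ∀ x ∈ setFinset (algebraGroup (J : Set A)),
        ∀ y ∈ setFinset (algebraGroup (J : Set A)),
        Ind (algebraGroup (J : Set A)) (algebraGroup (J' : Set A)) χ (x * (g - 1) * y + 1)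
          = Ind (algebraGroup (J : Set A)) (algebraGroup (J' : Set A)) χ g := by
      intro x hx y hy
      have hw := hmemw x hx y hy
      rw [mem_setFinset] at hx hy
      exact (hInd χ hχ g hg (x * (g - 1) * y + 1) hw
        ⟨x, hx, y, hy, add_sub_cancel_right _ _⟩).symm
    have sumconst : (∑ x ∈ setFinset (algebraGroup (J : Set A)),
        ∑ y ∈ setFinset (algebraGroup (J : Set A)),
          Ind (algebraGroup (J : Set A)) (algebraGroup (J' : Set A)) χ (x * (g - 1) * y + 1))
        = ((setFinset (algebraGroup (J : Set A))).card : ℂ) ^ 2 *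
            Ind (algebraGroup (J : Set A)) (algebraGroup (J' : Set A)) χ g := by
      rw [Finset.sum_congr rfl (fun x hx => Finset.sum_congr rfl fun y hy => const x hx y hy)]
      rw [Finset.sum_const, Finset.sum_const, nsmul_eq_mul, nsmul_eq_mul]
      ring
    have heq := key.symm.trans sumconst
    exact mul_left_cancel₀ (pow_ne_zero 2 hn) heq
  · -- SInd = Ind ⇒ Ind superclass fn
    intro hEq χ hχ u hu v hv hrel
    rw [← hEq χ hχ u hu, ← hEq χ hχ v hv]
    exact sind_superclassFn hnil (algebraGroup (J' : Set A)) χ u hu v hv hrel
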